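/- If D ⊂ R^d is convex and u = 1_{D^c} is the indicator of its complement, then for every radially symmetric probability density b_r supported on B_r(0), the function C_r(u)(x) = u(x)·(b_r ∗ u)(x) − (1/2)·u(x) is nonnegative for all x ∈ R^d. -/
import Mathlib


open MeasureTheory

theorem convex_indicator_constraint_nonneg (d : ℕ) (hd : 1 ≤ d)
    (D : Set (EuclideanSpace ℝ (Fin d))) (hDc : IsClosed D) (hD : Convex ℝ D)
    (r : ℝ) (hr : 0 < r)
    (b : EuclideanSpace ℝ (Fin d) → ℝ)
    (hb0 : ∀ y, 0 ≤ b y) (hbm : Measurable b)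
    (hbsym : ∀ y, b (-y) = b y)
    (hbsupp : ∀ y, r < ‖y‖ → b y = 0)
    (hbint : ∫ y, b y = 1) :
    ∀ x : EuclideanSpace ℝ (Fin d),
      0 ≤ Set.indicator Dᶜ 1 x * (∫ y, Set.indicator Dᶜ 1 y * b (y - x)) -
        (1 / 2 : ℝ) * Set.indicator Dᶜ 1 x := by
  intro x
  by_cases hx : x ∈ D
  · have : x ∉ Dᶜ := by simp [hx]
    simp [Set.indicator_of_notMem this]
  · have hxc : x ∈ Dᶜ := hx
    rw [Set.indicator_of_mem hxc]
    simp only [Pi.one_apply, one_mul]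
    have hbint' : Integrable b := by
      by_contra h
      rw [integral_undef h] at hbint; norm_num at hbint
    suffices h : (1/2:ℝ) ≤ ∫ y, Set.indicator Dᶜ 1 y * b (y - x) by linarith
    obtain ⟨f, c, hfD, hfx⟩ := geometric_hahn_banach_closed_point hD hDc hx
    -- integrability helper
    have key : ∀ (S : Set (EuclideanSpace ℝ (Fin d))), MeasurableSet S →
        ∀ a : EuclideanSpace ℝ (Fin d),
        Integrable (fun y => Set.indicator S 1 y * b (y - a)) := by
      intro S hS a
      have hba : Integrable (fun y => b (y - a)) := hbint'.comp_sub_right a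
      refine hba.mono' ?_ ?_
      · exact ((measurable_const.indicator hS).mul
          (hbm.comp (measurable_id.sub measurable_const))).aestronglyMeasurable
      · filter_upwards with y
        by_cases hy : y ∈ S
        · simp [Set.indicator_of_mem hy, abs_of_nonneg (hb0 _)]
        · simp [Set.indicator_of_notMem hy, hb0 _]
    have hfm : MeasurableSet {y : EuclideanSpace ℝ (Fin d) | c ≤ f y} :=
      measurableSet_le measurable_const f.continuous.measurable
    have hfm0 : MeasurableSet {y : EuclideanSpace ℝ (Fin d) | 0 ≤ f y} :=
      measurableSet_le measurable_const f.continuous.measurable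
    have hfm0' : MeasurableSet {y : EuclideanSpace ℝ (Fin d) | f y ≤ 0} :=
      measurableSet_le f.continuous.measurable measurable_const
    -- Step A : half space inside Dᶜ
    have stepA : (∫ y, Set.indicator {y | c ≤ f y} 1 y * b (y - x)) ≤
        ∫ y, Set.indicator Dᶜ 1 y * b (y - x) := by
      refine integral_mono (key _ hfm x) (key _ hDc.measurableSet.compl x) ?_
      intro y
      dsimp only
      by_cases hy : y ∈ {y : EuclideanSpace ℝ (Fin d) | c ≤ f y}
      · have hyD : y ∈ Dᶜ := fun hyD => absurd (hfD y hyD) (not_lt.2 hy)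
        simp [Set.indicator_of_mem hy, Set.indicator_of_mem hyD]
      · rw [Set.indicator_of_notMem hy, zero_mul]
        exact mul_nonneg (Set.indicator_nonneg (fun _ _ => zero_le_one) y) (hb0 _)
    -- Step B : change of variables y = z + x
    have stepB : (∫ z, Set.indicator {z : EuclideanSpace ℝ (Fin d) | c - f x ≤ f z} 1 z * b z)
        = ∫ y, Set.indicator {y | c ≤ f y} 1 y * b (y - x) := by
      rw [← integral_add_right_eq_self
        (fun y => Set.indicator {y : EuclideanSpace ℝ (Fin d) | c ≤ f y} 1 y * b (y - x)) x]
      congr 1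
      ext z
      have h1 : z + x - x = z := add_sub_cancel_right z x
      have h2 : (z + x ∈ {y : EuclideanSpace ℝ (Fin d) | c ≤ f y}) ↔
          (z ∈ {z : EuclideanSpace ℝ (Fin d) | c - f x ≤ f z}) := by
        simp [Set.mem_setOf_eq, map_add, sub_le_iff_le_add]
      rw [h1]
      by_cases hz : z ∈ {z : EuclideanSpace ℝ (Fin d) | c - f x ≤ f z}
      · rw [Set.indicator_of_mem hz, Set.indicator_of_mem (h2.2 hz)]
        simp
      · rw [Set.indicator_of_notMem hz, Set.indicator_of_notMem (fun h => hz (h2.1 h))]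
    -- Step C : {0 ≤ f} ⊆ {c - f x ≤ f}
    have stepC : (∫ z, Set.indicator {z : EuclideanSpace ℝ (Fin d) | 0 ≤ f z} 1 z * b z) ≤
        ∫ z, Set.indicator {z : EuclideanSpace ℝ (Fin d) | c - f x ≤ f z} 1 z * b z := by
      have key0 : ∀ (S : Set (EuclideanSpace ℝ (Fin d))), MeasurableSet S →
          Integrable (fun z => Set.indicator S 1 z * b z) := by
        intro S hS
        have := key S hS 0
        simpa using this
      refine integral_mono (key0 _ hfm0)
        (key0 _ (measurableSet_le measurable_const f.continuous.measurable)) ?_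
      intro z
      dsimp only
      by_cases hz : z ∈ {z : EuclideanSpace ℝ (Fin d) | 0 ≤ f z}
      · have : z ∈ {z : EuclideanSpace ℝ (Fin d) | c - f x ≤ f z} := by
          have : c - f x < 0 := by linarith
          exact le_trans this.le hz
        rw [Set.indicator_of_mem hz, Set.indicator_of_mem this]
      · rw [Set.indicator_of_notMem hz, zero_mul]
        exact mul_nonneg (Set.indicator_nonneg (fun _ _ => zero_le_one) z) (hb0 _)
    -- Step D : symmetry
    have stepD : (∫ z, Set.indicator {z : EuclideanSpace ℝ (Fin d) | 0 ≤ f z} 1 z * b z)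
        = ∫ z, Set.indicator {z : EuclideanSpace ℝ (Fin d) | f z ≤ 0} 1 z * b z := by
      rw [← integral_neg_eq_self
        (fun z => Set.indicator {z : EuclideanSpace ℝ (Fin d) | 0 ≤ f z} 1 z * b z)]
      congr 1
      ext z
      have h2 : (-z ∈ {z : EuclideanSpace ℝ (Fin d) | 0 ≤ f z}) ↔
          (z ∈ {z : EuclideanSpace ℝ (Fin d) | f z ≤ 0}) := by
        simp [Set.mem_setOf_eq, map_neg, neg_nonneg]
      rw [hbsym z]
      by_cases hz : z ∈ {z : EuclideanSpace ℝ (Fin d) | f z ≤ 0}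
      · rw [Set.indicator_of_mem hz, Set.indicator_of_mem (h2.2 hz)]
        simp
      · rw [Set.indicator_of_notMem hz, Set.indicator_of_notMem (fun h => hz (h2.1 h))]
    -- Step E : the two halves sum to at least 1
    have key0 : ∀ (S : Set (EuclideanSpace ℝ (Fin d))), MeasurableSet S →
        Integrable (fun z => Set.indicator S 1 z * b z) := by
      intro S hS
      have := key S hS 0
      simpa using this
    have stepE : (1:ℝ) ≤ (∫ z, Set.indicator {z : EuclideanSpace ℝ (Fin d) | 0 ≤ f z} 1 z * b z)
        + ∫ z, Set.indicator {z : EuclideanSpace ℝ (Fin d) | f z ≤ 0} 1 z * b z := by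
      rw [← integral_add (key0 _ hfm0) (key0 _ hfm0'), ← hbint]
      refine integral_mono hbint' ((key0 _ hfm0).add (key0 _ hfm0')) ?_
      intro z
      rcases le_total 0 (f z) with hz | hz
      · have h1 : z ∈ {z : EuclideanSpace ℝ (Fin d) | 0 ≤ f z} := hz
        simp only [Set.indicator_of_mem h1, Pi.one_apply, one_mul]
        have : 0 ≤ Set.indicator {z : EuclideanSpace ℝ (Fin d) | f z ≤ 0} 1 z * b z :=
          mul_nonneg (Set.indicator_nonneg (fun _ _ => zero_le_one) z) (hb0 _)
        linarith
      · have h1 : z ∈ {z : EuclideanSpace ℝ (Fin d) | f z ≤ 0} := hz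
        simp only [Set.indicator_of_mem h1, Pi.one_apply, one_mul]
        have : 0 ≤ Set.indicator {z : EuclideanSpace ℝ (Fin d) | 0 ≤ f z} 1 z * b z :=
          mul_nonneg (Set.indicator_nonneg (fun _ _ => zero_le_one) z) (hb0 _)
        linarith
    rw [stepD] at stepE
    linarith
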